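/- Let c > 1 and b be real numbers and let f : ℝ → ℂ be differentiable at every point v > 0, satisfying v·(log c)·f'(v) = 2·b·i·f(v) for all v > 0, |f(v)| = 1 for all v > 0, and the invariance f(c·v) = f(v) for all v > 0. Then there exists an integer k such that b = k·π. -/

import Mathlib

open Complex

/-- Concluding step of the proof of Theorem 12: a unimodular solution of the ODE
`v·ln c·f'(v) = 2ib·f(v)` which is invariant under `v ↦ c·v` forces `b = kπ` for some
integer `k`. -/
theorem stmt_13 (c b : ℝ) (hc : 1 < c) (f : ℝ → ℂ)
    (hdiff : ∀ v : ℝ, 0 < v → DifferentiableAt ℝ f v)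
    (hode : ∀ v : ℝ, 0 < v →
      (v : ℂ) * (Real.log c : ℂ) * deriv f v = 2 * (b : ℂ) * Complex.I * f v)
    (hmod : ∀ v : ℝ, 0 < v → ‖f v‖ = 1)
    (hinv : ∀ v : ℝ, 0 < v → f (c * v) = f v) :
    ∃ k : ℤ, b = (k : ℝ) * Real.pi := by
  set L : ℝ := Real.log c with hLdef
  have hL : 0 < L := Real.log_pos hc
  set g : ℝ → ℂ := fun v => f v * Complex.exp (-(2 * (b : ℂ) * Complex.I) * ((Real.log v : ℂ) / (L : ℂ))) with hgdef
  -- derivative of g is zero on (0,∞)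
  have hgderiv : ∀ v : ℝ, 0 < v → HasDerivAt g 0 v := by
    intro v hv
    have hlog : HasDerivAt (fun x : ℝ => ((Real.log x : ℂ))) ((v : ℂ)⁻¹) v := by
      have := (Real.hasDerivAt_log (ne_of_gt hv)).ofReal_comp
      simpa using this
    have hu : HasDerivAt (fun x : ℝ => -(2 * (b : ℂ) * Complex.I) * ((Real.log x : ℂ) / (L : ℂ)))
        (-(2 * (b : ℂ) * Complex.I) * ((v : ℂ)⁻¹ / (L : ℂ))) v := by
      simpa [div_eq_mul_inv, mul_comm, mul_left_comm, mul_assoc] using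
        ((hlog.div_const (L : ℂ)).const_mul (-(2 * (b : ℂ) * Complex.I)))
    have hexp := hu.cexp
    have hf := (hdiff v hv).hasDerivAt
    have hmul := hf.mul hexp
    have hodev := hode v hv
    have hvne : (v : ℂ) ≠ 0 := by exact_mod_cast ne_of_gt hv
    have hLne : (L : ℂ) ≠ 0 := by exact_mod_cast ne_of_gt hL
    have hderivf : deriv f v = 2 * (b : ℂ) * Complex.I * f v / ((v : ℂ) * (L : ℂ)) := by
      field_simp at hodev ⊢
      linear_combination hodev
    have : deriv f v * Complex.exp (-(2 * (b : ℂ) * Complex.I) * ((Real.log v : ℂ) / (L : ℂ)))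
        + f v * (Complex.exp (-(2 * (b : ℂ) * Complex.I) * ((Real.log v : ℂ) / (L : ℂ)))
          * (-(2 * (b : ℂ) * Complex.I) * ((v : ℂ)⁻¹ / (L : ℂ)))) = 0 := by
      rw [hderivf]
      field_simp
      ring
    rw [this] at hmul
    exact hmul
  -- g is constant on [1, c]
  have hsub : Set.Icc (1 : ℝ) c ⊆ Set.Ioi 0 := fun x hx => lt_of_lt_of_le one_pos hx.1
  have hcont : ContinuousOn g (Set.Icc 1 c) := fun x hx =>
    ((hgderiv x (hsub hx)).differentiableAt.continuousAt).continuousWithinAt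
  have hconst := constant_of_has_deriv_right_zero hcont
    (fun x hx => ((hgderiv x (lt_of_lt_of_le one_pos hx.1)).hasDerivWithinAt))
  have hgc : g c = g 1 := hconst c ⟨le_of_lt hc, le_refl c⟩
  have hg1 : g 1 = f 1 := by simp [hgdef]
  have hfc : f c = f 1 := by simpa using hinv 1 one_pos
  have hgc' : g c = f 1 * Complex.exp (-(2 * (b : ℂ) * Complex.I)) := by
    have hLne : (L : ℂ) ≠ 0 := by exact_mod_cast ne_of_gt hL
    simp only [hgdef]
    rw [hfc, ← hLdef, div_self hLne, mul_one]
  have hf1 : f 1 ≠ 0 := by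
    intro h
    have := hmod 1 one_pos
    rw [h] at this; simp at this
  have hexp1 : Complex.exp (-(2 * (b : ℂ) * Complex.I)) = 1 := by
    have := hgc.trans hg1
    rw [hgc'] at this
    field_simp at this
    exact this
  rw [Complex.exp_eq_one_iff] at hexp1
  obtain ⟨n, hn⟩ := hexp1
  refine ⟨-n, ?_⟩
  have : (-(2 * (b : ℂ)) : ℂ) = n * (2 * Real.pi) := by
    have hI : (Complex.I : ℂ) ≠ 0 := Complex.I_ne_zero
    have h2 : -(2 * (b : ℂ)) * Complex.I = (n : ℂ) * (2 * Real.pi) * Complex.I := by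
      linear_combination hn
    exact mul_right_cancel₀ hI h2
  have hre : -(2 * b) = (n : ℝ) * (2 * Real.pi) := by exact_mod_cast this
  push_cast
  linarith
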